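/- Let Q be nonnegative with finite Green's function on countable S, B a finite norming region, h(x) = E^x[#H_B] the expected number of B-entrance individuals, P_h the h-transformed chain with kernel p^h(x,y) = 1_{B^c}(x) q(x,y)h(y)/h(x), and for x ∈ B^c let μ^{(x)}(y) = h(x)·E_h^x[Σ_{n≥0} 1_{{y}}(X_n)] be h(x) times the P_h-occupation measure started at x. Then for all y ∈ S: G(x,y) = 1_{B^c}(y)·μ^{(x)}(y)/h(y) + Σ_{z∈B} μ^{(x)}(z)·G(z,y). -/

import Mathlib

open scoped ENNReal

/-- Entrywise matrix powers of a nonnegative kernel `Q` on a countable set `S`. -/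
noncomputable def qpow {S : Type*} [DecidableEq S] (Q : S → S → ℝ≥0∞) : ℕ → S → S → ℝ≥0∞
  | 0 => fun x y => if x = y then 1 else 0
  | n + 1 => fun x y => ∑' z, Q x z * qpow Q n z y

/-- Green's function `G = Σ_{n ≥ 0} Q^n` (entrywise, in `ℝ≥0∞`). -/
noncomputable def green {S : Type*} [DecidableEq S] (Q : S → S → ℝ≥0∞) (x y : S) : ℝ≥0∞ :=
  ∑' n, qpow Q n x y

/-- The `h`-transformed kernel `p^h(x,y) = 1_{B^c}(x) · Q(x,y) h(y) / h(x)`. -/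
noncomputable def phKer {S : Type*} [DecidableEq S] (Q : S → S → ℝ≥0∞) (B : Finset S)
    (h : S → ℝ≥0∞) (x y : S) : ℝ≥0∞ :=
  if x ∈ B then 0 else Q x y * h y / h x

section AuxLemmas
variable {S : Type*} [DecidableEq S]

/-- killed kernel -/
noncomputable def killedKer (Q : S → S → ℝ≥0∞) (B : Finset S) (x y : S) : ℝ≥0∞ :=
  if x ∈ B then 0 else Q x y

lemma qpow_one (R : S → S → ℝ≥0∞) (a b : S) : qpow R 1 a b = R a b := by
  simp only [qpow]
  rw [tsum_eq_single b]
  · simp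
  · intro c hc; simp [hc]

lemma qpow_zero_row (R : S → S → ℝ≥0∞) {z : S} (hz : ∀ w, R z w = 0) (n : ℕ) (y : S) :
    qpow R (n + 1) z y = 0 := by
  simp [qpow, hz]

lemma qpow_killed_mem (Q : S → S → ℝ≥0∞) (B : Finset S) {z : S} (hz : z ∈ B) (n : ℕ) (y : S) :
    qpow (killedKer Q B) n z y = if n = 0 ∧ z = y then 1 else 0 := by
  cases n with
  | zero => simp [qpow]
  | succ n =>
      rw [qpow_zero_row]
      · simp
      · intro w; simp [killedKer, hz]

/-- convolution identity in ℝ≥0∞ -/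
lemma tsum_conv (a b : ℕ → ℝ≥0∞) :
    ∑' n, ∑ k ∈ Finset.range n, a (k + 1) * b (n - 1 - k)
      = (∑' k, a (k + 1)) * ∑' m, b m := by
  rw [tsum_eq_zero_add' ENNReal.summable]
  simp only [Finset.range_zero, Finset.sum_empty, zero_add, Nat.add_sub_cancel]
  have h1 : ∀ n : ℕ, ∑ k ∈ Finset.range (n + 1), a (k + 1) * b (n - k)
      = ∑ kl ∈ Finset.HasAntidiagonal.antidiagonal n, a (kl.1 + 1) * b kl.2 := fun n =>
    (Finset.Nat.sum_antidiagonal_eq_sum_range_succ (fun k l => a (k + 1) * b l) n).symm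
  calc ∑' n, ∑ k ∈ Finset.range (n + 1), a (k + 1) * b (n + 1 - 1 - k)
      = ∑' n, ∑ kl ∈ Finset.HasAntidiagonal.antidiagonal n, a (kl.1 + 1) * b kl.2 := by
        simp only [Nat.add_sub_cancel, Nat.succ_sub_one]
        exact tsum_congr h1
    _ = ∑' n, ∑' kl : (Finset.HasAntidiagonal.antidiagonal n : Finset (ℕ × ℕ)),
          a ((kl : ℕ × ℕ).1 + 1) * b (kl : ℕ × ℕ).2 := by
        refine tsum_congr fun n => ?_
        rw [tsum_fintype]
        exact (Finset.sum_coe_sort (Finset.HasAntidiagonal.antidiagonal n)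
          (fun kl : ℕ × ℕ => a (kl.1 + 1) * b kl.2)).symm
    _ = ∑' p : (Σ n : ℕ, (Finset.HasAntidiagonal.antidiagonal n : Finset (ℕ × ℕ))),
          a ((p.2 : ℕ × ℕ).1 + 1) * b (p.2 : ℕ × ℕ).2 := (ENNReal.tsum_sigma' (fun p : (Σ n : ℕ, (Finset.HasAntidiagonal.antidiagonal n : Finset (ℕ × ℕ))) => a ((p.2 : ℕ × ℕ).1 + 1) * b (p.2 : ℕ × ℕ).2)).symm
    _ = ∑' q : ℕ × ℕ, a (q.1 + 1) * b q.2 :=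
        Finset.HasAntidiagonal.sigmaAntidiagonalEquivProd.tsum_eq (fun q : ℕ × ℕ => a (q.1 + 1) * b q.2)
    _ = ∑' k, ∑' m, a (k + 1) * b m := ENNReal.tsum_prod (f := fun k m => a (k + 1) * b m)
    _ = (∑' k, a (k + 1)) * ∑' m, b m := by
        simp_rw [ENNReal.tsum_mul_left]
        rw [ENNReal.tsum_mul_right]

lemma qpow_htransform (Q : S → S → ℝ≥0∞) (B : Finset S) (h : S → ℝ≥0∞)
    (hh0 : ∀ x, 0 < h x) (hhfin : ∀ x, h x < ⊤) :
    ∀ n z y, h z * qpow (phKer Q B h) n z y = qpow (killedKer Q B) n z y * h y := by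
  intro n
  induction n with
  | zero =>
      intro z y
      simp only [qpow]
      split_ifs with hzy
      · subst hzy; rw [mul_one, one_mul]
      · rw [mul_zero, zero_mul]
  | succ n ih =>
      intro z y
      by_cases hzB : z ∈ B
      · simp [qpow, phKer, killedKer, hzB]
      · simp only [qpow]
        rw [← ENNReal.tsum_mul_left, ← ENNReal.tsum_mul_right]
        refine tsum_congr fun w => ?_
        calc h z * (phKer Q B h z w * qpow (phKer Q B h) n w y)
            = (h z * (Q z w * h w / h z)) * qpow (phKer Q B h) n w y := by
              rw [phKer, if_neg hzB]; ring
          _ = (Q z w * h w) * qpow (phKer Q B h) n w y := by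
              rw [ENNReal.mul_div_cancel (hh0 z).ne' (hhfin z).ne]
          _ = Q z w * (h w * qpow (phKer Q B h) n w y) := by ring
          _ = Q z w * (qpow (killedKer Q B) n w y * h y) := by rw [ih]
          _ = killedKer Q B z w * qpow (killedKer Q B) n w y * h y := by
              rw [killedKer, if_neg hzB]; ring

lemma qpow_first_passage (Q : S → S → ℝ≥0∞) (B : Finset S) :
    ∀ n : ℕ, ∀ x ∉ B, ∀ y : S,
      qpow Q n x y = (if y ∈ B then 0 else qpow (killedKer Q B) n x y)
        + ∑ z ∈ B, ∑ k ∈ Finset.range n,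
            qpow (killedKer Q B) (k + 1) x z * qpow Q (n - 1 - k) z y := by
  set K := killedKer Q B with hK
  intro n
  induction n with
  | zero =>
      intro x hx y
      simp only [Finset.range_zero, Finset.sum_empty, Finset.sum_const_zero, add_zero, qpow]
      by_cases hxy : x = y
      · subst hxy; simp [hx]
      · simp [hxy]
  | succ n ih =>
      intro x hx y
      have split1 : qpow Q (n + 1) x y
          = (∑' w, if w ∈ B then 0 else Q x w * qpow Q n w y)
            + ∑' w, if w ∈ B then Q x w * qpow Q n w y else 0 := by
        simp only [qpow]
        rw [← ENNReal.tsum_add]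
        refine tsum_congr fun w => ?_
        split_ifs <;> simp
      have termC : (∑' w, if w ∈ B then Q x w * qpow Q n w y else 0)
          = ∑ z ∈ B, qpow K 1 x z * qpow Q n z y := by
        rw [tsum_eq_sum (s := B) (fun w hw => by simp [hw])]
        refine Finset.sum_congr rfl fun z hz => ?_
        rw [if_pos hz, qpow_one, hK, killedKer, if_neg hx]
      have termNB : (∑' w, if w ∈ B then 0 else Q x w * qpow Q n w y)
          = (∑' w, if w ∈ B then 0 else Q x w * (if y ∈ B then 0 else qpow K n w y))
            + ∑' w, if w ∈ B then 0 else Q x w * ∑ z ∈ B, ∑ k ∈ Finset.range n,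
                qpow K (k + 1) w z * qpow Q (n - 1 - k) z y := by
        rw [← ENNReal.tsum_add]
        refine tsum_congr fun w => ?_
        by_cases hwB : w ∈ B
        · simp [hwB]
        · simp only [if_neg hwB]
          rw [ih w hwB y, mul_add]
      have termA : (∑' w, if w ∈ B then 0 else Q x w * (if y ∈ B then 0 else qpow K n w y))
          = (if y ∈ B then 0 else qpow K (n + 1) x y) := by
        by_cases hyB : y ∈ B
        · simp [hyB]
        · simp only [if_neg hyB]
          have : qpow K (n + 1) x y = ∑' w, K x w * qpow K n w y := by
            simp only [qpow]
          rw [this]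
          refine tsum_congr fun w => ?_
          by_cases hwB : w ∈ B
          · have hwy : ¬ (n = 0 ∧ w = y) := by
              rintro ⟨-, rfl⟩; exact hyB hwB
            simp [hwB, hK, qpow_killed_mem Q B hwB, hwy]
          · rw [if_neg hwB, hK, killedKer, if_neg hx]
      have termB : (∑' w, if w ∈ B then 0 else Q x w * ∑ z ∈ B, ∑ k ∈ Finset.range n,
              qpow K (k + 1) w z * qpow Q (n - 1 - k) z y)
          = ∑ z ∈ B, ∑ k ∈ Finset.range n, qpow K (k + 2) x z * qpow Q (n - 1 - k) z y := by
        have ptwise : ∀ w, (if w ∈ B then 0 else Q x w * ∑ z ∈ B, ∑ k ∈ Finset.range n,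
              qpow K (k + 1) w z * qpow Q (n - 1 - k) z y)
            = ∑ z ∈ B, ∑ k ∈ Finset.range n,
                K x w * qpow K (k + 1) w z * qpow Q (n - 1 - k) z y := by
          intro w
          by_cases hwB : w ∈ B
          · simp [hwB, hK, qpow_killed_mem Q B hwB]
          · rw [if_neg hwB, Finset.mul_sum]
            refine Finset.sum_congr rfl fun z _ => ?_
            rw [Finset.mul_sum]
            refine Finset.sum_congr rfl fun k _ => ?_
            rw [hK, killedKer, if_neg hx, mul_assoc]
        rw [tsum_congr ptwise, Summable.tsum_finsetSum (fun z _ => ENNReal.summable)]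
        refine Finset.sum_congr rfl fun z _ => ?_
        rw [Summable.tsum_finsetSum (fun k _ => ENNReal.summable)]
        refine Finset.sum_congr rfl fun k _ => ?_
        rw [ENNReal.tsum_mul_right]
        congr 1
      rw [split1, termNB, termA, termB, termC]
      have reidx : ∀ z : S, ∑ k ∈ Finset.range (n + 1),
            qpow K (k + 1) x z * qpow Q (n + 1 - 1 - k) z y
          = (∑ k ∈ Finset.range n, qpow K (k + 2) x z * qpow Q (n - 1 - k) z y)
            + qpow K 1 x z * qpow Q n z y := by
        intro z
        rw [Finset.sum_range_succ' (fun k => qpow K (k + 1) x z * qpow Q (n + 1 - 1 - k) z y) n]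
        congr 1
        refine Finset.sum_congr rfl fun k _ => ?_
        have h2 : n + 1 - 1 - (k + 1) = n - 1 - k := by omega
        rw [h2]
      simp only [reidx, Finset.sum_add_distrib]
      ring

lemma green_first_passage (Q : S → S → ℝ≥0∞) (B : Finset S) {x : S} (hx : x ∉ B) (y : S) :
    green Q x y = (if y ∈ B then 0 else green (killedKer Q B) x y)
      + ∑ z ∈ B, green (killedKer Q B) x z * green Q z y := by
  set K := killedKer Q B with hK
  have step : green Q x y = ∑' n, ((if y ∈ B then 0 else qpow K n x y)
      + ∑ z ∈ B, ∑ k ∈ Finset.range n, qpow K (k + 1) x z * qpow Q (n - 1 - k) z y) :=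
    tsum_congr fun n => qpow_first_passage Q B n x hx y
  rw [step, ENNReal.tsum_add]
  congr 1
  · by_cases hyB : y ∈ B
    · simp [hyB]
    · simp only [if_neg hyB]
      rfl
  · rw [Summable.tsum_finsetSum (fun z _ => ENNReal.summable)]
    refine Finset.sum_congr rfl fun z hz => ?_
    rw [tsum_conv (fun k => qpow K k x z) (fun m => qpow Q m z y)]
    congr 1
    symm
    have hxz : qpow K 0 x z = 0 := by
      have hne : x ≠ z := fun he => hx (he ▸ hz)
      simp [qpow, hne]
    rw [green, tsum_eq_zero_add' ENNReal.summable, hxz, zero_add]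

end AuxLemmas

/-- with `μ^{(x)}(y) = h(x)·g_h(x,y)` (where `g_h` is the Green's function of
`p^h`), one has `G(x,y) = 1_{B^c}(y) μ^{(x)}(y)/h(y) + Σ_{z∈B} μ^{(x)}(z) G(z,y)`. -/
theorem green_eq_hTransform_decomposition {S : Type*} [Countable S] [DecidableEq S]
    (Q : S → S → ℝ≥0∞) (hG : ∀ x y, green Q x y < ⊤) (B : Finset S)
    (h : S → ℝ≥0∞) (hh0 : ∀ x, 0 < h x) (hhfin : ∀ x, h x < ⊤)
    (hB : ∀ x ∈ B, h x = 1) (hharm : ∀ x ∉ B, ∑' y, Q x y * h y = h x)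
    (x : S) (hx : x ∉ B) :
    ∀ y : S, green Q x y =
      (if y ∈ B then 0 else h x * green (phKer Q B h) x y / h y) +
      ∑' z, (if z ∈ B then h x * green (phKer Q B h) x z * green Q z y else 0) := by
  intro y
  have htr : ∀ u : S, h x * green (phKer Q B h) x u = green (killedKer Q B) x u * h u := by
    intro u
    calc h x * green (phKer Q B h) x u
        = ∑' n, h x * qpow (phKer Q B h) n x u := by
          rw [green, ENNReal.tsum_mul_left]
      _ = ∑' n, qpow (killedKer Q B) n x u * h u :=
          tsum_congr fun n => qpow_htransform Q B h hh0 hhfin n x u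
      _ = green (killedKer Q B) x u * h u := by
          rw [green, ENNReal.tsum_mul_right]
  have t1 : (if y ∈ B then 0 else h x * green (phKer Q B h) x y / h y)
      = (if y ∈ B then 0 else green (killedKer Q B) x y) := by
    by_cases hyB : y ∈ B
    · simp [hyB]
    · simp only [if_neg hyB]
      rw [htr y, mul_div_assoc, ENNReal.div_self (hh0 y).ne' (hhfin y).ne, mul_one]
  have t2 : (∑' z, if z ∈ B then h x * green (phKer Q B h) x z * green Q z y else 0)
      = ∑ z ∈ B, green (killedKer Q B) x z * green Q z y := by
    rw [tsum_eq_sum (s := B) (fun z hz => by simp [hz])]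
    refine Finset.sum_congr rfl fun z hz => ?_
    rw [if_pos hz, htr z, hB z hz, mul_one]
  rw [t1, t2]
  exact green_first_passage Q B hx y
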